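/- Let r < n and for each s ≥ 1 let A(s) be an r×r row-stochastic matrix and B(s) an (n−r)×r row-stochastic matrix. Define V(s) as the n×n block matrix V(s) = [[A(s), 0], [B(s), 0]]. Suppose the left-ordered products A(s)·A(s−1)···A(1) converge to the rank-one matrix 𝟏ᵣ·vᵀ for some v ∈ ℝʳ. Then the products V(s)·V(s−1)···V(1) converge to the rank-one matrix 𝟏ₙ·[vᵀ, 0], i.e., all rows of the limiting product are equal. In particular, for any initial vector y(0), the limit lim_{s→∞} V(s)···V(1)·y(0) lies in span{𝟏ₙ} (consensus). -/

import Mathlib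

open Matrix

/-- Block-triangular consensus: if `V(s) = [[A(s),0],[B(s),0]]` with `A(s)`,
`B(s)` row-stochastic, and the left products `A(s)⋯A(1)` converge to the
rank-one matrix `𝟏ᵣvᵀ`, then `V(s)⋯V(1)` converges to `𝟏ₙ[vᵀ,0]`, and for any
initial vector the product applied to it converges to a consensus vector. -/
theorem block_product_consensus
    (n r : ℕ) (hr : r < n)
    (A : ℕ → Matrix (Fin r) (Fin r) ℝ)
    (B : ℕ → Matrix (Fin (n - r)) (Fin r) ℝ)
    (hApos : ∀ s i j, 0 ≤ A s i j) (hArow : ∀ s i, ∑ j, A s i j = 1)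
    (hBpos : ∀ s i j, 0 ≤ B s i j) (hBrow : ∀ s i, ∑ j, B s i j = 1)
    (V : ℕ → Matrix (Fin r ⊕ Fin (n - r)) (Fin r ⊕ Fin (n - r)) ℝ)
    (hV : ∀ s, V s = Matrix.fromBlocks (A s) 0 (B s) 0)
    (PA : ℕ → Matrix (Fin r) (Fin r) ℝ)
    (hPA0 : PA 0 = 1) (hPA : ∀ s, PA (s+1) = A (s+1) * PA s)
    (PV : ℕ → Matrix (Fin r ⊕ Fin (n - r)) (Fin r ⊕ Fin (n - r)) ℝ)
    (hPV0 : PV 0 = 1) (hPV : ∀ s, PV (s+1) = V (s+1) * PV s)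
    (v : Fin r → ℝ)
    (hlim : Filter.Tendsto PA Filter.atTop
      (nhds (Matrix.of fun _ j => v j))) :
    Filter.Tendsto PV Filter.atTop
      (nhds (Matrix.of fun _ j => Sum.elim v (fun _ => (0:ℝ)) j)) ∧
    ∀ y0 : (Fin r ⊕ Fin (n - r)) → ℝ, ∃ α : ℝ,
      Filter.Tendsto (fun s => (PV s) *ᵥ y0) Filter.atTop
        (nhds (α • fun _ => (1:ℝ))) := by
  classical
  -- entrywise limit of PA
  have hPAentry : ∀ k j, Filter.Tendsto (fun s => PA s k j) Filter.atTop (nhds (v j)) := by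
    intro k j
    have h1 := (tendsto_pi_nhds.mp hlim) k
    have h2 := (tendsto_pi_nhds.mp h1) j
    simpa using h2
  -- structure of PV (s+1)
  have hPVsucc : ∀ s, PV (s+1) =
      Matrix.fromBlocks (PA (s+1)) 0 (B (s+1) * PA s) 0 := by
    intro s
    induction s with
    | zero =>
      rw [hPV 0, hPV0, hV 1, hPA 0, hPA0]
      simp
    | succ t ih =>
      rw [hPV (t+1), ih, hV (t+2), Matrix.fromBlocks_multiply, hPA (t+1)]
      congr 1 <;> simp
  -- lower-left block limit
  have hlow : ∀ (i : Fin (n - r)) (j : Fin r),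
      Filter.Tendsto (fun s => (B (s+1) * PA s) i j) Filter.atTop (nhds (v j)) := by
    intro i j
    have hB1 : ∀ s k, B s i k ≤ 1 := by
      intro s k
      calc B s i k ≤ ∑ m, B s i m :=
            Finset.single_le_sum (fun m _ => hBpos s i m) (Finset.mem_univ k)
        _ = 1 := hBrow s i
    have hzero : Filter.Tendsto
        (fun s => (B (s+1) * PA s) i j - v j) Filter.atTop (nhds 0) := by
      have hg : Filter.Tendsto (fun s => ∑ k : Fin r, |PA s k j - v j|)
          Filter.atTop (nhds 0) := by
        have h0 : Filter.Tendsto (fun s => ∑ k : Fin r, |PA s k j - v j|)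
            Filter.atTop (nhds (∑ _k : Fin r, (0:ℝ))) := by
          apply tendsto_finset_sum
          intro k _
          simpa using ((hPAentry k j).sub_const (v j)).abs
        simpa using h0
      have hbound : ∀ s : ℕ,
          ‖(B (s+1) * PA s) i j - v j‖ ≤ ∑ k : Fin r, |PA s k j - v j| := by
        intro s
        have hrw : (B (s+1) * PA s) i j - v j
            = ∑ k, B (s+1) i k * (PA s k j - v j) := by
          simp only [Matrix.mul_apply, mul_sub, Finset.sum_sub_distrib,
            ← Finset.sum_mul, hBrow (s+1) i, one_mul]
        rw [Real.norm_eq_abs, hrw]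
        calc |∑ k, B (s+1) i k * (PA s k j - v j)|
            ≤ ∑ k, |B (s+1) i k * (PA s k j - v j)| := Finset.abs_sum_le_sum_abs _ _
          _ ≤ ∑ k, |PA s k j - v j| := by
              apply Finset.sum_le_sum
              intro k _
              rw [abs_mul, abs_of_nonneg (hBpos (s+1) i k)]
              exact mul_le_of_le_one_left (abs_nonneg _) (hB1 (s+1) k)
      exact squeeze_zero_norm hbound hg
    have := hzero.add_const (v j)
    simpa using this
  -- main limit
  have hmain : Filter.Tendsto PV Filter.atTop
      (nhds (Matrix.of fun _ j => Sum.elim v (fun _ => (0:ℝ)) j)) := by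
    rw [← Filter.tendsto_add_atTop_iff_nat 1]
    have heq : (fun s => PV (s+1)) =
        fun s => Matrix.fromBlocks (PA (s+1)) 0 (B (s+1) * PA s) 0 := by
      funext s; exact hPVsucc s
    rw [heq]; refine tendsto_pi_nhds.mpr ?_
    intro p
    rw [tendsto_pi_nhds]
    intro q
    rcases p with p | p <;> rcases q with q | q
    · simpa using ((Filter.tendsto_add_atTop_iff_nat 1).mpr (hPAentry p q) :)
    · simp only [Matrix.fromBlocks_apply₁₂, Matrix.zero_apply]
      simpa using tendsto_const_nhds
    · simpa using hlow p q
    · simp only [Matrix.fromBlocks_apply₂₂, Matrix.zero_apply]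
      simpa using tendsto_const_nhds
  have hmainentry : ∀ p q, Filter.Tendsto (fun s => PV s p q) Filter.atTop
      (nhds (Sum.elim v (fun _ => (0:ℝ)) q)) := by
    intro p q
    have h1 := (tendsto_pi_nhds.mp hmain) p
    have h2 := (tendsto_pi_nhds.mp h1) q
    simpa using h2
  refine ⟨hmain, ?_⟩
  intro y0
  refine ⟨∑ j, v j * y0 (Sum.inl j), ?_⟩
  rw [tendsto_pi_nhds]
  intro p
  have h1 : Filter.Tendsto (fun s => ∑ q, PV s p q * y0 q) Filter.atTop
      (nhds (∑ q, Sum.elim v (fun _ => (0:ℝ)) q * y0 q)) := by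
    apply tendsto_finset_sum
    intro q _
    exact (hmainentry p q).mul_const (y0 q)
  have h2 : (∑ q, Sum.elim v (fun _ => (0:ℝ)) q * y0 q)
      = ∑ j, v j * y0 (Sum.inl j) := by
    rw [Fintype.sum_sum_type]
    simp
  rw [h2] at h1
  have h3 : (fun s => (PV s *ᵥ y0) p) = fun s => ∑ q, PV s p q * y0 q := by
    funext s; simp [Matrix.mulVec, dotProduct]
  simpa [h3] using h1
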